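/- Let K be a positive integer and let t ≥ 0 be a real number with 5·√K·t ≤ 1. If λ₁, …, λ_K are real numbers satisfying ∑_{i=1}^K λ_i² ≤ K·t², then ∏_{i=1}^K (1 + λ_i) ≥ (1 − t)^K. -/

import Mathlib

/-- Tangent-line bound: for `0 < t ≤ 1/5` and `|x| ≤ 1/5`,
`log(1+x) ≥ log(1−t) + (t² − x²)/(2t(1−t))`. -/
lemma key_log_bound (t x : ℝ) (ht : 0 < t) (ht5 : t ≤ 1/5)
    (hx1 : -(1/5) ≤ x) (hx2 : x ≤ 1/5) :
    Real.log (1 - t) + (t^2 - x^2)/(2*t*(1-t)) ≤ Real.log (1 + x) := by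
  have h1x : (0:ℝ) < 1 + x := by linarith
  have h1t : (0:ℝ) < 1 - t := by linarith
  have hlog : Real.log (1-t) - Real.log (1+x) ≤ (1-t)/(1+x) - 1 := by
    have h := Real.log_le_sub_one_of_pos (div_pos h1t h1x)
    rwa [Real.log_div h1t.ne' h1x.ne'] at h
  have h2 : (t^2 - x^2)/(2*t*(1-t)) ≤ 1 - (1-t)/(1+x) := by
    have hden : (0:ℝ) < 2*t*(1-t) := by positivity
    rw [show 1 - (1-t)/(1+x) = (x+t)/(1+x) by field_simp; ring,
      div_le_div_iff₀ hden h1x]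
    nlinarith [mul_nonneg (sq_nonneg (x+t)) (show (0:ℝ) ≤ x + 1 - 2*t by linarith)]
  linarith

/-- If `λ₁, …, λ_K` satisfy `∑ λ_i² ≤ K·t²` with `5·√K·t ≤ 1`, then
`∏ (1 + λ_i) ≥ (1 − t)^K`. -/
theorem stmt_0 (K : ℕ) (hK : 0 < K) (t : ℝ) (ht : 0 ≤ t)
    (h5 : 5 * Real.sqrt K * t ≤ 1) (lam : Fin K → ℝ)
    (hsum : ∑ i, lam i ^ 2 ≤ (K : ℝ) * t ^ 2) :
    (1 - t) ^ K ≤ ∏ i, (1 + lam i) := by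
  have hK1 : (1:ℝ) ≤ (K:ℝ) := by exact_mod_cast hK
  have hsq : (1:ℝ) ≤ Real.sqrt K := by
    rw [show (1:ℝ) = Real.sqrt 1 by simp]
    exact Real.sqrt_le_sqrt hK1
  have hsqK : Real.sqrt K ^ 2 = (K:ℝ) := Real.sq_sqrt (by positivity)
  have ht5 : t ≤ 1/5 := by nlinarith
  have hKt : (K:ℝ) * t^2 ≤ 1/25 := by
    have ha : (0:ℝ) ≤ 5 * Real.sqrt K * t := by positivity
    have h1 : 5^2 * Real.sqrt K^2 * t^2 ≤ 1 := by
      rw [← mul_pow, ← mul_pow]; nlinarith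
    rw [hsqK] at h1; linarith
  have hle : ∀ i, lam i ^ 2 ≤ ∑ j, lam j ^ 2 := fun i =>
    Finset.single_le_sum (fun j _ => sq_nonneg (lam j)) (Finset.mem_univ i)
  rcases ht.eq_or_lt with h0 | htpos
  · -- t = 0 : all lam i = 0
    subst h0
    have hall : ∀ i, lam i = 0 := by
      intro i
      have h := hle i
      nlinarith [sq_nonneg (lam i)]
    simp [hall]
  · have hbd : ∀ i, lam i ^ 2 ≤ 1/25 := fun i => le_trans (le_trans (hle i) hsum) hKt
    have hlo : ∀ i, -(1/5) ≤ lam i := fun i => by nlinarith [hbd i, sq_nonneg (lam i + 1/5)]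
    have hhi : ∀ i, lam i ≤ 1/5 := fun i => by nlinarith [hbd i, sq_nonneg (lam i - 1/5)]
    have hpos : ∀ i, (0:ℝ) < 1 + lam i := fun i => by linarith [hlo i]
    have hprodpos : (0:ℝ) < ∏ i, (1 + lam i) := Finset.prod_pos (fun i _ => hpos i)
    have h1t : (0:ℝ) < 1 - t := by linarith
    have hpowpos : (0:ℝ) < (1 - t) ^ K := by positivity
    rw [← Real.log_le_log_iff hpowpos hprodpos, Real.log_pow,
      Real.log_prod (fun i _ => (hpos i).ne')]
    have hstep : ∀ i ∈ (Finset.univ : Finset (Fin K)),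
        Real.log (1 - t) + (t^2 - lam i^2)/(2*t*(1-t)) ≤ Real.log (1 + lam i) :=
      fun i _ => key_log_bound t (lam i) htpos ht5 (hlo i) (hhi i)
    have hsum2 := Finset.sum_le_sum hstep
    have hrw : ∑ i : Fin K, (Real.log (1 - t) + (t^2 - lam i^2)/(2*t*(1-t)))
        = (K:ℝ) * Real.log (1 - t) + ((K:ℝ)*t^2 - ∑ i, lam i^2)/(2*t*(1-t)) := by
      rw [Finset.sum_add_distrib, Finset.sum_const, Finset.card_univ, Fintype.card_fin,
        ← Finset.sum_div, Finset.sum_sub_distrib, Finset.sum_const, Finset.card_univ,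
        Fintype.card_fin, nsmul_eq_mul]
      ring
    have hden : (0:ℝ) < 2*t*(1-t) := by positivity
    have hnn : 0 ≤ ((K:ℝ)*t^2 - ∑ i, lam i^2)/(2*t*(1-t)) :=
      div_nonneg (by linarith) hden.le
    rw [hrw] at hsum2
    linarith
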